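/- Let G be a countable amenable group and let φ : P_fin(G) → [0,∞) be a function on nonempty finite subsets of G satisfying: (i) φ(F₁) ≤ φ(F₂) whenever F₁ ⊆ F₂; (ii) φ(Fg) = φ(F) for all finite F and g ∈ G; (iii) φ(F₁ ∪ F₂) ≤ φ(F₁) + φ(F₂). Then there exists b ≥ 0 such that for every ε > 0 there exist a finite set K ⊆ G and δ > 0 such that |b − φ(F)/|F|| ≤ ε for every nonempty finite (K, δ)-invariant set F ⊆ G. -/

import Mathlib

open scoped Pointwise ENNReal

set_option linter.unusedSectionVars false
set_option maxHeartbeats 1000000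



/-- An action of a group `G` on a set `X`. -/
structure GAction (G X : Type*) [Group G] where
  act : G → X → X
  act_one : ∀ x, act 1 x = x
  act_mul : ∀ g h x, act (g * h) x = act g (act h x)

/-- The dynamical sup-metric `d^α_F(x,y) = max_{g ∈ F} d(α_g x, α_g y)`. -/
noncomputable def dynMetric {G X : Type*} [Group G] (α : GAction G X)
    (d : X → X → ℝ) (F : Finset G) (x y : X) : ℝ :=
  ↑(F.sup fun g => (d (α.act g x) (α.act g y)).toNNReal)

/-- `widim_ε(X, d)`: minimal order of a finite open cover of mesh at most `ε`. -/
noncomputable def widim {X : Type*} [TopologicalSpace X] (d : X → X → ℝ) (ε : ℝ) : ℕ :=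
  sInf {n : ℕ | ∃ 𝒰 : Finset (Set X),
    (∀ U ∈ 𝒰, IsOpen U) ∧ (∀ x : X, ∃ U ∈ 𝒰, x ∈ U) ∧
    (∀ U ∈ 𝒰, ∀ x ∈ U, ∀ y ∈ U, d x y ≤ ε) ∧
    ∀ x : X, {U : Set X | U ∈ 𝒰 ∧ x ∈ U}.ncard ≤ n + 1}

/-- `F` is `(K, δ)`-invariant: `|KF \ F| ≤ δ |F|`. -/
def IsFolnerInv {G : Type*} [Group G] (K : Finset G) (δ : ℝ) (F : Finset G) : Prop :=
  letI := Classical.decEq G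
  (((K * F) \ F).card : ℝ) ≤ δ * F.card

/-- A Følner sequence of nonempty finite subsets of `G`. -/
def IsFolnerSeq {G : Type*} [Group G] (Fseq : ℕ → Finset G) : Prop :=
  (∀ n, (Fseq n).Nonempty) ∧
    ∀ (K : Finset G) (δ : ℝ), 0 < δ → ∃ N : ℕ, ∀ n ≥ N, IsFolnerInv K δ (Fseq n)

/-- `mdim_ε(X, α, d)` computed along the sequence `Fseq`. -/
noncomputable def mdimEps {G X : Type*} [Group G] [TopologicalSpace X] (α : GAction G X)
    (d : X → X → ℝ) (Fseq : ℕ → Finset G) (ε : ℝ) : ℝ≥0∞ :=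
  Filter.atTop.limsup fun n =>
    (widim (dynMetric α d (Fseq n)) ε : ℝ≥0∞) / ((Fseq n).card : ℝ≥0∞)

/-- Mean dimension `mdim(X, α) = sup_{ε > 0} mdim_ε(X, α, d)`. -/
noncomputable def mdim {G X : Type*} [Group G] [TopologicalSpace X] (α : GAction G X)
    (d : X → X → ℝ) (Fseq : ℕ → Finset G) : ℝ≥0∞ :=
  ⨆ (ε : ℝ) (_ : 0 < ε), mdimEps α d Fseq ε

/-- An `ε`-embedding: all fibers have diameter `< ε`. -/
def IsEpsEmbedding {X Z : Type*} [PseudoMetricSpace X] (f : X → Z) (ε : ℝ) : Prop :=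
  ∀ z : Z, Metric.diam (f ⁻¹' {z}) < ε

/-- The orbit map `I_f(x) = (f(α_g(x)))_{g ∈ G}` (with the index convention making it
equivariant for the shift `σ_g((x_h)_h) = (x_{g⁻¹h})_h`). -/
def Ifun {G X K : Type*} [Group G] (α : GAction G X) (f : X → K) (x : X) (g : G) : K :=
  f (α.act g⁻¹ x)

/-- Almost finiteness: clopen castles with arbitrarily invariant shapes partitioning the space. -/
def IsAlmostFinite {G Y : Type*} [Group G] [TopologicalSpace Y] (β : GAction G Y) : Prop :=
  ∀ (K : Finset G) (δ : ℝ), 0 < δ →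
    ∃ (ι : Type) (_ : Fintype ι) (W : ι → Set Y) (S : ι → Finset G),
      (∀ i, IsClopen (W i)) ∧
      (∀ i, (S i).Nonempty ∧ IsFolnerInv K δ (S i)) ∧
      (∀ i j : ι, ∀ s ∈ S i, ∀ t ∈ S j, ¬(i = j ∧ s = t) →
        Disjoint (β.act s '' W i) (β.act t '' W j)) ∧
      (⋃ i, ⋃ s ∈ S i, β.act s '' W i) = Set.univ

/-- `d` is a metric on `X` inducing the given topology. -/
def IsCompatibleMetric {X : Type*} [TopologicalSpace X] (d : X → X → ℝ) : Prop :=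
  (∀ x y, 0 ≤ d x y) ∧ (∀ x y, d x y = 0 ↔ x = y) ∧ (∀ x y, d x y = d y x) ∧
    (∀ x y z, d x z ≤ d x y + d y z) ∧
    ∀ s : Set X, IsOpen s ↔ ∀ x ∈ s, ∃ ε > 0, {y | d x y < ε} ⊆ s

/-- The shift action `σ_g((x_h)_h) = (x_{g⁻¹h})_h` of `G` on `K^G`. -/
def shiftAction (G : Type*) [Group G] (K : Type*) : GAction G (G → K) where
  act g x h := x (g⁻¹ * h)
  act_one x := by funext h; simp
  act_mul g g' x := by funext h; simp [mul_assoc]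

section aux
variable {G : Type*} [Group G] [DecidableEq G]

def tile (S : Finset G) (c : G) : Finset G := S.image (fun x => x * c)

lemma mem_tile {S : Finset G} {c x : G} : x ∈ tile S c ↔ ∃ s ∈ S, s * c = x := by
  simp only [tile, Finset.mem_image]

lemma card_tile (S : Finset G) (c : G) : (tile S c).card = S.card :=
  Finset.card_image_of_injective _ (mul_left_injective c)

lemma tile_eq_mul (S : Finset G) (c : G) : tile S c = S * {c} := by
  rw [Finset.mul_singleton]; rfl

lemma mul_tile (K S : Finset G) (c : G) : K * tile S c = tile (K * S) c := by
  rw [tile_eq_mul, tile_eq_mul, mul_assoc]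

lemma sdiff_tile (S T : Finset G) (c : G) : tile S c \ tile T c = tile (S \ T) c := by
  simp only [tile]
  exact (Finset.image_sdiff _ _ (mul_left_injective c)).symm

def listUnion (l : List (Finset G)) : Finset G := l.foldr (· ∪ ·) ∅

lemma mem_listUnion {l : List (Finset G)} {x : G} :
    x ∈ listUnion l ↔ ∃ P ∈ l, x ∈ P := by
  induction l with
  | nil => simp [listUnion]
  | cons P t ih =>
    show x ∈ P ∪ listUnion t ↔ _
    rw [Finset.mem_union, ih]
    simp

lemma listUnion_append (l m : List (Finset G)) :
    listUnion (l ++ m) = listUnion l ∪ listUnion m := by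
  ext x
  simp only [mem_listUnion, Finset.mem_union, List.mem_append]
  aesop

lemma card_listUnion_le (l : List (Finset G)) :
    (listUnion l).card ≤ (l.map Finset.card).sum := by
  induction l with
  | nil => simp [listUnion]
  | cons P t ih =>
    show (P ∪ listUnion t).card ≤ P.card + (t.map Finset.card).sum
    calc (P ∪ listUnion t).card ≤ P.card + (listUnion t).card := Finset.card_union_le _ _
    _ ≤ P.card + (t.map Finset.card).sum := Nat.add_le_add_left ih _

lemma list_sum_mul {α : Type*} (l : List α) (f : α → ℝ) (a : ℝ) :
    (l.map fun x => a * f x).sum = a * (l.map f).sum := by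
  induction l with
  | nil => simp
  | cons x t ih => simp [ih]; ring

lemma list_sum_le {α : Type*} (l : List α) (f g : α → ℝ) (h : ∀ x ∈ l, f x ≤ g x) :
    (l.map f).sum ≤ (l.map g).sum := by
  induction l with
  | nil => simp
  | cons x t ih =>
    simp only [List.map_cons, List.sum_cons]
    have h1 := h x List.mem_cons_self
    have h2 := ih (fun y hy => h y (List.mem_cons_of_mem x hy))
    linarith


lemma folner_def (K F : Finset G) (δ : ℝ) :
    IsFolnerInv K δ F ↔ (((K * F) \ F).card : ℝ) ≤ δ * F.card := by
  unfold IsFolnerInv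
  congr!

lemma folner_mono {K K' : Finset G} {δ δ' : ℝ} {F : Finset G} (hK : K' ⊆ K) (hδ : δ ≤ δ')
    (h : IsFolnerInv K δ F) : IsFolnerInv K' δ' F := by
  rw [folner_def] at h ⊢
  have h1 : (K' * F) \ F ⊆ (K * F) \ F :=
    Finset.sdiff_subset_sdiff (Finset.mul_subset_mul_right hK) (le_refl _)
  have h2 : ((((K' * F) \ F).card : ℝ)) ≤ (((K * F) \ F).card : ℝ) := by
    exact_mod_cast Finset.card_le_card h1
  have h3 : δ * F.card ≤ δ' * F.card := by
    apply mul_le_mul_of_nonneg_right hδ; positivity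
  linarith

lemma packing (S : Finset G) (hS : S.Nonempty) (θ : ℝ) (hθ0 : 0 < θ) (hθ1 : θ < 1)
    (B : Finset G) :
    ∀ (k : ℕ) (W₀ : Finset G), ((B.biUnion (tile S)) \ W₀).card ≤ k →
    ∃ C : Finset G, C ⊆ B ∧
      (1-θ) * (C.card * S.card) ≤ (((C.biUnion (tile S)) \ W₀).card : ℝ) ∧
      ∀ b ∈ B, (((tile S b) \ (W₀ ∪ C.biUnion (tile S))).card : ℝ) < (1-θ) * S.card := by
  intro k
  induction k using Nat.strong_induction_on with
  | _ k IH =>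
    intro W₀ hk
    by_cases hb : ∃ b ∈ B, (1-θ) * S.card ≤ ((tile S b \ W₀).card : ℝ)
    · obtain ⟨b, hbB, hbc⟩ := hb
      have hSpos : (0:ℝ) < S.card := by
        exact_mod_cast Finset.card_pos.mpr hS
      have htpos : 0 < (tile S b \ W₀).card := by
        rcases Nat.eq_zero_or_pos (tile S b \ W₀).card with h' | h'
        · rw [h'] at hbc; push_cast at hbc; nlinarith
        · exact h'
      have hsub : tile S b \ W₀ ⊆ (B.biUnion (tile S)) \ W₀ :=
        Finset.sdiff_subset_sdiff (Finset.subset_biUnion_of_mem (tile S) hbB) (le_refl _)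
      have hmeas : ((B.biUnion (tile S)) \ (W₀ ∪ tile S b)).card < k := by
        have h1 : (B.biUnion (tile S)) \ (W₀ ∪ tile S b)
            = ((B.biUnion (tile S)) \ W₀) \ (tile S b \ W₀) := by
          ext x; simp only [Finset.mem_sdiff, Finset.mem_union]; tauto
        have h2 : tile S b \ W₀ ⊆ (B.biUnion (tile S)) \ W₀ := hsub
        have hcd := Finset.card_le_card h2
        rw [h1, Finset.card_sdiff_of_subset h2]
        omega
      obtain ⟨C', hC'B, h1', h2'⟩ := IH _ hmeas (W₀ ∪ tile S b) (le_refl _)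
      refine ⟨insert b C', Finset.insert_subset hbB hC'B, ?_, ?_⟩
      · -- accounting
        have hXY : Disjoint (tile S b \ W₀) (C'.biUnion (tile S) \ (W₀ ∪ tile S b)) := by
          apply Finset.disjoint_left.mpr
          intro x hx hy
          rw [Finset.mem_sdiff, Finset.mem_union] at hy
          exact hy.2 (Or.inr (Finset.mem_sdiff.mp hx).1)
        have hsub2 : (tile S b \ W₀) ∪ (C'.biUnion (tile S) \ (W₀ ∪ tile S b))
            ⊆ (insert b C').biUnion (tile S) \ W₀ := by
          rw [Finset.biUnion_insert]
          intro x hx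
          rcases Finset.mem_union.mp hx with h | h
          · rw [Finset.mem_sdiff] at h ⊢
            exact ⟨Finset.mem_union_left _ h.1, h.2⟩
          · rw [Finset.mem_sdiff, Finset.mem_union] at h
            rw [Finset.mem_sdiff]
            refine ⟨Finset.mem_union_right _ h.1, fun hc => h.2 (Or.inl hc)⟩
        have hcards : ((tile S b \ W₀).card : ℝ) + (C'.biUnion (tile S) \ (W₀ ∪ tile S b)).card
            ≤ ((insert b C').biUnion (tile S) \ W₀).card := by
          have hn : (tile S b \ W₀).card + (C'.biUnion (tile S) \ (W₀ ∪ tile S b)).card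
              ≤ ((insert b C').biUnion (tile S) \ W₀).card := by
            rw [← Finset.card_union_of_disjoint hXY]
            exact Finset.card_le_card hsub2
          exact_mod_cast hn
        have hci : ((insert b C').card : ℝ) ≤ (C'.card : ℝ) + 1 := by
          exact_mod_cast Finset.card_insert_le b C'
        have h1θ : (0:ℝ) ≤ 1 - θ := by linarith
        calc (1-θ) * ((insert b C').card * S.card)
            ≤ (1-θ) * ((C'.card + 1) * S.card) := by
              apply mul_le_mul_of_nonneg_left _ h1θ
              apply mul_le_mul_of_nonneg_right hci
              positivity
          _ = (1-θ) * S.card + (1-θ) * (C'.card * S.card) := by ring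
          _ ≤ ((tile S b \ W₀).card : ℝ) + (C'.biUnion (tile S) \ (W₀ ∪ tile S b)).card := by
              exact add_le_add hbc h1'
          _ ≤ _ := hcards
      · intro b' hb'
        have heq : W₀ ∪ (insert b C').biUnion (tile S)
            = (W₀ ∪ tile S b) ∪ C'.biUnion (tile S) := by
          rw [Finset.biUnion_insert]
          ext x
          simp only [Finset.mem_union]
          tauto
        rw [heq]
        exact h2' b' hb'
    · push_neg at hb
      refine ⟨∅, Finset.empty_subset _, ?_, ?_⟩
      · simp
      · intro b hbB
        simpa using hb b hbB

lemma count_le (S B W : Finset G) :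
    (∑ b ∈ B, ((tile S b) ∩ W).card) ≤ S.card * W.card := by
  have h1 : ∀ b, ((tile S b) ∩ W).card = ∑ w ∈ W, if w ∈ tile S b then 1 else 0 := by
    intro b
    rw [Finset.sum_ite_mem, Finset.inter_comm]
    simp
  calc (∑ b ∈ B, ((tile S b) ∩ W).card)
      = ∑ b ∈ B, ∑ w ∈ W, if w ∈ tile S b then 1 else 0 := by
        exact Finset.sum_congr rfl (fun b _ => h1 b)
    _ = ∑ w ∈ W, ∑ b ∈ B, if w ∈ tile S b then 1 else 0 := Finset.sum_comm
    _ = ∑ w ∈ W, (B.filter (fun b => w ∈ tile S b)).card := by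
        refine Finset.sum_congr rfl (fun w _ => ?_)
        rw [Finset.card_filter]
    _ ≤ ∑ _w ∈ W, S.card := by
        refine Finset.sum_le_sum (fun w _ => ?_)
        apply Finset.card_le_card_of_injOn (fun b => w * b⁻¹)
        · intro b hb
          obtain ⟨s, hs, hsb⟩ := mem_tile.mp (Finset.mem_filter.mp hb).2
          have : w * b⁻¹ = s := by rw [← hsb]; group
          show w * b⁻¹ ∈ (S : Set G); rw [this]; exact Finset.mem_coe.mpr hs
        · intro b₁ _ b₂ _ h
          have := mul_left_cancel h
          exact inv_injective this
    _ = S.card * W.card := by rw [Finset.sum_const, smul_eq_mul, mul_comm]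

lemma cover_list (φ : Finset G → ℝ) (hpos : ∀ F, 0 ≤ φ F)
    (hmono : ∀ F₁ F₂ : Finset G, F₁ ⊆ F₂ → φ F₁ ≤ φ F₂)
    (hsub : ∀ F₁ F₂ : Finset G, φ (F₁ ∪ F₂) ≤ φ F₁ + φ F₂) :
    ∀ (l : List (Finset G)) (A : Finset G), A.Nonempty →
      (∀ a ∈ A, ∃ P ∈ l, a ∈ P) → φ A ≤ (l.map φ).sum := by
  intro l
  induction l with
  | nil =>
    intro A hA hcov
    obtain ⟨a, ha⟩ := hA
    obtain ⟨P, hP, _⟩ := hcov a ha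
    simp at hP
  | cons P t ih =>
    intro A hA hcov
    classical
    set A' := A.filter (fun a => ∃ Q ∈ t, a ∈ Q) with hA'
    have hsubd : A ⊆ P ∪ A' := by
      intro a ha
      rcases hcov a ha with ⟨Q, hQ, haQ⟩
      rcases List.mem_cons.mp hQ with rfl | hQt
      · exact Finset.mem_union_left _ haQ
      · exact Finset.mem_union_right _ (Finset.mem_filter.mpr ⟨ha, Q, hQt, haQ⟩)
    have h1 : φ A ≤ φ (P ∪ A') := hmono _ _ hsubd
    have h2 : φ (P ∪ A') ≤ φ P + φ A' := hsub P A'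
    simp only [List.map_cons, List.sum_cons]
    by_cases hne : A'.Nonempty
    · have h3 := ih A' hne (fun a ha => (Finset.mem_filter.mp ha).2)
      linarith
    · have hempty : A' = ∅ := Finset.not_nonempty_iff_eq_empty.mp hne
      rw [hempty, Finset.union_empty] at h1
      have hsum : 0 ≤ (t.map φ).sum := by
        apply List.sum_nonneg
        intro x hx
        obtain ⟨F, _, rfl⟩ := List.mem_map.mp hx
        exact hpos F
      linarith

lemma phi_le_card (φ : Finset G → ℝ)
    (hmono : ∀ F₁ F₂ : Finset G, F₁ ⊆ F₂ → φ F₁ ≤ φ F₂)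
    (hinv : ∀ (F : Finset G) (g : G), φ (F.image fun x => x * g) = φ F)
    (hsub : ∀ F₁ F₂ : Finset G, φ (F₁ ∪ F₂) ≤ φ F₁ + φ F₂) :
    ∀ F : Finset G, F.Nonempty → φ F ≤ F.card * φ {1} := by
  have hsing : ∀ g : G, φ {g} = φ {1} := by
    intro g
    have : ({1} : Finset G).image (fun x => x * g) = {g} := by simp
    rw [← this, hinv]
  intro F
  induction F using Finset.induction with
  | empty => intro h; simp at h
  | insert _ _ hnotmem _ =>
    rename_i a s ih
    intro _
    by_cases hs : s.Nonempty
    · have h1 : φ (insert a s) ≤ φ {a} + φ s := by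
        rw [Finset.insert_eq]
        exact hsub _ _
      have h2 := ih hs
      rw [Finset.card_insert_of_notMem hnotmem]
      push_cast
      rw [hsing a] at h1
      linarith
    · have : s = ∅ := Finset.not_nonempty_iff_eq_empty.mp hs
      subst this
      simp [hsing a]

lemma toList_map_sum' {α : Type*} (s : Finset α) (f : α → ℝ) :
    (s.toList.map f).sum = ∑ a ∈ s, f a := by
  rw [← Multiset.sum_coe, ← Multiset.map_coe, Finset.toList, Multiset.coe_toList]
  rfl

lemma list_sum_nonneg' {α : Type*} (l : List α) (f : α → ℝ) (h : ∀ x ∈ l, 0 ≤ f x) :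
    0 ≤ (l.map f).sum := by
  apply List.sum_nonneg
  intro x hx
  obtain ⟨y, hy, rfl⟩ := List.mem_map.mp hx
  exact h y hy

lemma stage_induction (T : ℕ → Finset G) (n : ℕ) (θ : ℝ) (hθ0 : 0 < θ) (hθh : θ ≤ 1/2)
    (hTne : ∀ m, m < n → (T m).Nonempty)
    (hchain : ∀ i m, i < m → m < n →
      (((((T i).image (fun x => x⁻¹)) * T m) \ T m).card : ℝ) ≤ θ * (T m).card)
    (A : Finset G) (hA : A.Nonempty)
    (K_A : Finset G) (hKA : ∀ m, m < n → T m ⊆ K_A)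
    (hAinv : (((K_A * A) \ A).card : ℝ) ≤ (θ / (K_A.card + 1)) * A.card) :
    ∀ k, k ≤ n → ∃ L : List (ℕ × G),
      (∀ p ∈ L, n - k ≤ p.1 ∧ p.1 < n) ∧
      listUnion (L.map fun p => tile (T p.1) p.2) ⊆ A ∧
      (1 - θ) * ((L.map fun p => ((T p.1).card : ℝ)).sum)
        ≤ ((listUnion (L.map fun p => tile (T p.1) p.2)).card : ℝ) ∧
      ((A \ listUnion (L.map fun p => tile (T p.1) p.2)).card : ℝ)
        ≤ ((1 - θ) ^ k + 3 * θ) * A.card := by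
  have hAcard : (0:ℝ) ≤ A.card := by positivity
  intro k
  induction k with
  | zero =>
    intro _
    refine ⟨[], by simp, by simp [listUnion], by simp [listUnion], ?_⟩
    show ((A \ listUnion []).card : ℝ) ≤ ((1-θ)^0 + 3*θ) * A.card
    have : listUnion ([] : List (Finset G)) = ∅ := rfl
    rw [this, Finset.sdiff_empty, pow_zero]
    nlinarith
  | succ k ih =>
    intro hk1
    have hkn : k < n := by omega
    obtain ⟨L, hLidx, hUsub, hUcount, hUuncov⟩ := ih (le_of_lt hkn)
    have hn0 : 0 < n := by omega
    set m₀ := n - 1 - k with hm₀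
    have hm₀n : m₀ < n := by omega
    set S := T m₀ with hSdef
    have hS : S.Nonempty := hTne _ hm₀n
    have hScard : (0:ℝ) < S.card := by exact_mod_cast Finset.card_pos.mpr hS
    set U := listUnion (L.map fun p => tile (T p.1) p.2) with hUdef
    set A' := A \ U with hA'def
    set B := A'.filter (fun a => tile S a ⊆ A') with hBdef
    obtain ⟨C, hCB, hCcount, hCmax⟩ :=
      packing S hS θ hθ0 (by linarith) B ((B.biUnion (tile S)) \ U).card U (le_refl _)
    set W := C.biUnion (tile S) with hWdef
    have hWA' : W ⊆ A' := by
      apply Finset.biUnion_subset.mpr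
      intro c hc
      exact (Finset.mem_filter.mp (hCB hc)).2
    have hWU : Disjoint W U := by
      apply Finset.disjoint_left.mpr
      intro x hx hxu
      have := hWA' hx
      rw [hA'def, Finset.mem_sdiff] at this
      exact this.2 hxu
    have hWsdiff : W \ U = W := Finset.sdiff_eq_self_of_disjoint hWU
    -- the new list
    set L' := L ++ C.toList.map (fun c => (m₀, c)) with hL'def
    have hUnew : listUnion (L'.map fun p => tile (T p.1) p.2) = U ∪ W := by
      rw [hL'def, List.map_append, listUnion_append, ← hUdef]
      congr 1
      ext x
      rw [mem_listUnion]
      simp only [List.map_map, List.mem_map, Function.comp]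
      rw [hWdef, Finset.mem_biUnion]
      constructor
      · rintro ⟨P, ⟨c, hc, rfl⟩, hx⟩
        exact ⟨c, Finset.mem_toList.mp hc, hx⟩
      · rintro ⟨c, hc, hx⟩
        exact ⟨tile S c, ⟨c, Finset.mem_toList.mpr hc, rfl⟩, hx⟩
    have hUWcard : ((U ∪ W).card : ℝ) = (U.card : ℝ) + (W.card : ℝ) := by
      have hn : (U ∪ W).card = U.card + W.card := Finset.card_union_of_disjoint hWU.symm
      exact_mod_cast hn
    -- sum over the new part
    have hCsum : ((C.toList.map (fun c => (m₀, c))).map (fun p : ℕ × G => ((T p.1).card : ℝ))).sum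
        = (C.card : ℝ) * S.card := by
      rw [List.map_map]
      have : ((fun p : ℕ × G => ((T p.1).card : ℝ)) ∘ (fun c => (m₀, c))) = fun _ => ((S.card : ℝ)) := by
        funext c; rfl
      rw [this, toList_map_sum']
      rw [Finset.sum_const, nsmul_eq_mul]
    refine ⟨L', ?_, ?_, ?_, ?_⟩
    · intro p hp
      rcases List.mem_append.mp hp with h | h
      · have := hLidx p h; omega
      · obtain ⟨c, _, rfl⟩ := List.mem_map.mp h
        simp only []
        omega
    · rw [hUnew]
      apply Finset.union_subset hUsub
      intro x hx
      have := hWA' hx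
      rw [hA'def, Finset.mem_sdiff] at this
      exact this.1
    · rw [hUnew, hUWcard, hL'def, List.map_append, List.sum_append, hCsum]
      rw [hWsdiff] at hCcount
      have := hUcount
      rw [mul_add]
      push_cast at hCcount ⊢
      linarith
    · -- the uncovered estimate
      rw [hUnew]
      have hAUW : A \ (U ∪ W) = A' \ W := by
        rw [hA'def]; ext x; simp only [Finset.mem_sdiff, Finset.mem_union]; tauto
      rw [hAUW]
      -- every b in B has a θ-fraction of its tile covered by W
      have hpt : ∀ b ∈ B, θ * S.card ≤ ((tile S b ∩ W).card : ℝ) := by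
        intro b hb
        have h1 := hCmax b hb
        have htb : tile S b ⊆ A' := (Finset.mem_filter.mp hb).2
        have h2 : tile S b \ (U ∪ W) = tile S b \ W := by
          ext x
          simp only [Finset.mem_sdiff, Finset.mem_union]
          constructor
          · rintro ⟨hx, h⟩; exact ⟨hx, fun hw => h (Or.inr hw)⟩
          · rintro ⟨hx, h⟩
            refine ⟨hx, fun hc => ?_⟩
            rcases hc with hc | hc
            · have := htb hx
              rw [hA'def, Finset.mem_sdiff] at this
              exact this.2 hc
            · exact h hc
        rw [h2] at h1
        have h3 : (tile S b \ W).card + (tile S b ∩ W).card = (tile S b).card :=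
          Finset.card_sdiff_add_card_inter _ _
        have h4 : (tile S b).card = S.card := card_tile S b
        have h5 : ((tile S b \ W).card : ℝ) + ((tile S b ∩ W).card : ℝ) = (S.card : ℝ) := by
          rw [← h4]; exact_mod_cast h3
        linarith
      -- θ |B| ≤ |W|
      have hWlb : θ * B.card ≤ (W.card : ℝ) := by
        have hsum1 : θ * S.card * B.card ≤ ((∑ b ∈ B, ((tile S b) ∩ W).card : ℕ) : ℝ) := by
          calc θ * S.card * B.card = ∑ _b ∈ B, θ * S.card := by
                rw [Finset.sum_const, nsmul_eq_mul]; ring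
          _ ≤ ∑ b ∈ B, ((tile S b ∩ W).card : ℝ) := Finset.sum_le_sum (fun b hb => hpt b hb)
          _ = _ := by push_cast; rfl
        have hsum2 : ((∑ b ∈ B, ((tile S b) ∩ W).card : ℕ) : ℝ) ≤ (S.card : ℝ) * W.card := by
          exact_mod_cast count_le S B W
        nlinarith [hsum1.trans hsum2, hScard]
      -- lower bound on |B|
      have hbad1 : ∀ a, a ∈ A' → ¬ (a ∈ B) → (∃ t ∈ S, t*a ∉ A) ∨ (∃ t ∈ S, t*a ∈ U) := by
        intro a haA' haB
        rw [hBdef, Finset.mem_filter] at haB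
        push_neg at haB
        have hnot : ¬ tile S a ⊆ A' := haB haA'
        rw [Finset.not_subset] at hnot
        obtain ⟨x, hxt, hxA'⟩ := hnot
        obtain ⟨t, htS, rfl⟩ := mem_tile.mp hxt
        rw [hA'def, Finset.mem_sdiff] at hxA'
        push_neg at hxA'
        by_cases hxA : t * a ∈ A
        · exact Or.inr ⟨t, htS, hxA' hxA⟩
        · exact Or.inl ⟨t, htS, hxA⟩
      set bad1 := A.filter (fun a => ∃ t ∈ S, t*a ∉ A) with hbad1def
      set bad2 := A'.filter (fun a => ∃ t ∈ S, t*a ∈ U) with hbad2def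
      have hsplit : A' \ B ⊆ bad1 ∪ bad2 := by
        intro a ha
        rw [Finset.mem_sdiff] at ha
        obtain ⟨haA', haB⟩ := ha
        have haA : a ∈ A := by
          rw [hA'def, Finset.mem_sdiff] at haA'; exact haA'.1
        rcases hbad1 a haA' haB with h | h
        · exact Finset.mem_union_left _ (Finset.mem_filter.mpr ⟨haA, h⟩)
        · exact Finset.mem_union_right _ (Finset.mem_filter.mpr ⟨haA', h⟩)
      have hbad1card : (bad1.card : ℝ) ≤ θ * A.card := by
        have hsub1 : bad1 ⊆ S.biUnion (fun t => A.filter (fun a => t*a ∉ A)) := by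
          intro a ha
          rw [hbad1def, Finset.mem_filter] at ha
          obtain ⟨haA, t, htS, hta⟩ := ha
          exact Finset.mem_biUnion.mpr ⟨t, htS, Finset.mem_filter.mpr ⟨haA, hta⟩⟩
        have h1 : bad1.card ≤ ∑ t ∈ S, (A.filter (fun a => t*a ∉ A)).card :=
          le_trans (Finset.card_le_card hsub1) (Finset.card_biUnion_le)
        have h2 : ∀ t ∈ S, (A.filter (fun a => t*a ∉ A)).card ≤ ((K_A * A) \ A).card := by
          intro t htS
          apply Finset.card_le_card_of_injOn (fun a => t*a)
          · intro a ha
            rw [Finset.mem_coe, Finset.mem_filter] at ha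
            exact Finset.mem_sdiff.mpr ⟨Finset.mul_mem_mul (hKA m₀ hm₀n htS) ha.1, ha.2⟩
          · intro a _ a' _ h
            exact mul_left_cancel h
        have h3 : bad1.card ≤ S.card * ((K_A*A)\A).card := by
          calc bad1.card ≤ ∑ t ∈ S, (A.filter (fun a => t*a ∉ A)).card := h1
          _ ≤ ∑ _t ∈ S, ((K_A*A)\A).card := Finset.sum_le_sum h2
          _ = S.card * ((K_A*A)\A).card := by rw [Finset.sum_const, smul_eq_mul]
        have hSK : (S.card : ℝ) ≤ K_A.card := by
          exact_mod_cast Finset.card_le_card (hKA m₀ hm₀n)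
        have hK1 : (0:ℝ) < (K_A.card : ℝ) + 1 := by positivity
        have h4 : (bad1.card : ℝ) ≤ (S.card:ℝ) * (((K_A*A)\A).card : ℝ) := by exact_mod_cast h3
        have h5 : (S.card:ℝ) * (((K_A*A)\A).card:ℝ) ≤ (S.card:ℝ) * ((θ/(K_A.card+1)) * A.card) :=
          mul_le_mul_of_nonneg_left hAinv (le_of_lt hScard)
        have h6 : (S.card:ℝ) * ((θ/(K_A.card+1)) * A.card) ≤ θ * A.card := by
          rw [← mul_assoc]
          apply mul_le_mul_of_nonneg_right _ hAcard
          calc (S.card:ℝ) * (θ/(K_A.card+1))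
              ≤ ((K_A.card:ℝ)+1) * (θ/(K_A.card+1)) := by
                apply mul_le_mul_of_nonneg_right (by linarith) (by positivity)
          _ = θ := by field_simp
        linarith
      have hbad2card : (bad2.card : ℝ) ≤ 2 * θ * A.card := by
        set Sinv := S.image (fun x => x⁻¹) with hSinvdef
        have hsub2 : bad2 ⊆ listUnion (L.map fun p => (Sinv * tile (T p.1) p.2) \ tile (T p.1) p.2) := by
          intro a ha
          rw [hbad2def, Finset.mem_filter] at ha
          obtain ⟨haA', t, htS, htaU⟩ := ha
          rw [hUdef, mem_listUnion] at htaU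
          obtain ⟨P, hPmem, htaP⟩ := htaU
          obtain ⟨p, hpL, rfl⟩ := List.mem_map.mp hPmem
          rw [mem_listUnion]
          refine ⟨_, List.mem_map.mpr ⟨p, hpL, rfl⟩, ?_⟩
          rw [Finset.mem_sdiff]
          constructor
          · have hta : t⁻¹ * (t * a) = a := by group
            rw [← hta]
            exact Finset.mul_mem_mul (Finset.mem_image_of_mem _ htS) htaP
          · intro haP
            have haU : a ∈ U := by
              rw [hUdef, mem_listUnion]
              exact ⟨_, List.mem_map.mpr ⟨p, hpL, rfl⟩, haP⟩
            rw [hA'def, Finset.mem_sdiff] at haA'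
            exact haA'.2 haU
        have h1 : bad2.card ≤ ((L.map fun p => (Sinv * tile (T p.1) p.2) \ tile (T p.1) p.2).map Finset.card).sum :=
          le_trans (Finset.card_le_card hsub2) (card_listUnion_le _)
        have h2 : ((bad2.card : ℕ) : ℝ) ≤ (L.map fun p => ((((Sinv * tile (T p.1) p.2) \ tile (T p.1) p.2).card : ℝ))).sum := by
          have hc := (Nat.cast_le (α := ℝ)).mpr h1
          rw [Nat.cast_list_sum, List.map_map, List.map_map] at hc
          exact hc
        have h3 : ∀ p ∈ L, ((((Sinv * tile (T p.1) p.2) \ tile (T p.1) p.2).card : ℝ)) ≤ θ * ((T p.1).card : ℝ) := by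
          intro p hpL
          have hm : m₀ < p.1 := by have := hLidx p hpL; omega
          have hcard : ((Sinv * tile (T p.1) p.2) \ tile (T p.1) p.2).card
              = ((Sinv * T p.1) \ T p.1).card := by
            rw [mul_tile, sdiff_tile, card_tile]
          rw [hcard]
          exact hchain m₀ p.1 hm (hLidx p hpL).2
        have h4 := list_sum_le L _ _ h3
        rw [list_sum_mul] at h4
        have hsumnn : 0 ≤ (L.map fun p => ((T p.1).card:ℝ)).sum :=
          list_sum_nonneg' _ _ (fun p _ => by positivity)
        have hUA : (U.card : ℝ) ≤ A.card := by exact_mod_cast Finset.card_le_card hUsub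
        have hsum2A : (L.map fun p => ((T p.1).card:ℝ)).sum ≤ 2 * A.card := by
          nlinarith [hUcount]
        calc (bad2.card:ℝ) ≤ θ * (L.map fun p => ((T p.1).card:ℝ)).sum := le_trans h2 h4
        _ ≤ θ * (2*A.card) := mul_le_mul_of_nonneg_left hsum2A (le_of_lt hθ0)
        _ = 2*θ*A.card := by ring
      have hABdiff : ((A' \ B).card : ℝ) ≤ 3*θ*A.card := by
        have h := Finset.card_le_card hsplit
        have h2 := Finset.card_union_le bad1 bad2
        have h3 : ((A'\B).card:ℝ) ≤ (bad1.card:ℝ) + bad2.card := by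
          exact_mod_cast le_trans h h2
        linarith
      have hBsub : B ⊆ A' := Finset.filter_subset _ _
      have hBlb : (A'.card : ℝ) - 3*θ*A.card ≤ B.card := by
        have h := Finset.card_sdiff_of_subset hBsub
        have hble : B.card ≤ A'.card := Finset.card_le_card hBsub
        have h2 : ((A'\B).card : ℝ) = (A'.card:ℝ) - B.card := by
          rw [h, Nat.cast_sub hble]
        linarith
      have hWA'card : (W.card : ℝ) ≤ A'.card := by
        exact_mod_cast Finset.card_le_card hWA'
      have hfin : ((A' \ W).card : ℝ) = (A'.card:ℝ) - W.card := by
        rw [Finset.card_sdiff_of_subset hWA', Nat.cast_sub (Finset.card_le_card hWA')]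
      have hkey : (A'.card:ℝ) - W.card ≤ (1-θ)*A'.card + 3*θ^2*A.card := by
        have hmul : θ*((A'.card:ℝ) - 3*θ*A.card) ≤ θ*B.card :=
          mul_le_mul_of_nonneg_left hBlb (le_of_lt hθ0)
        nlinarith [hWlb]
      have h1θ : (0:ℝ) ≤ 1-θ := by linarith
      have hstep : (1-θ)*(A'.card:ℝ) ≤ (1-θ)*(((1-θ)^k + 3*θ)*A.card) :=
        mul_le_mul_of_nonneg_left hUuncov h1θ
      have hring : (1-θ)*(((1-θ)^k + 3*θ)*A.card)
          = (1-θ)^(k+1)*A.card + 3*θ*A.card - 3*θ^2*A.card := by ring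
      rw [hfin]
      have hθ2A : 0 ≤ 3*θ^2*(A.card:ℝ) := by positivity
      calc (A'.card:ℝ) - W.card ≤ (1-θ)*A'.card + 3*θ^2*A.card := hkey
      _ ≤ (1-θ)^(k+1)*A.card + 3*θ*A.card := by linarith
      _ = ((1-θ)^(k+1) + 3*θ)*A.card := by ring

end aux


theorem stmt2 {G : Type*} [Group G] [Countable G] [DecidableEq G]
    (hG : ∀ (K : Finset G) (δ : ℝ), 0 < δ → ∃ F : Finset G, F.Nonempty ∧ IsFolnerInv K δ F)
    (φ : Finset G → ℝ) (hpos : ∀ F, 0 ≤ φ F)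
    (hmono : ∀ F₁ F₂ : Finset G, F₁ ⊆ F₂ → φ F₁ ≤ φ F₂)
    (hinv : ∀ (F : Finset G) (g : G), φ (F.image fun x => x * g) = φ F)
    (hsub : ∀ F₁ F₂ : Finset G, φ (F₁ ∪ F₂) ≤ φ F₁ + φ F₂) :
    ∃ b : ℝ, 0 ≤ b ∧ ∀ ε : ℝ, 0 < ε → ∃ (K : Finset G) (δ : ℝ), 0 < δ ∧
      ∀ F : Finset G, F.Nonempty → IsFolnerInv K δ F → |b - φ F / F.card| ≤ ε := by
  set c := φ {1} with hcdef
  have hc0 : 0 ≤ c := hpos _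
  have hsing : ∀ g : G, φ ({g} : Finset G) = c := by
    intro g
    have h1 : ({1} : Finset G).image (fun x => x * g) = {g} := by simp
    rw [← h1, hinv]
  have hphile : ∀ F : Finset G, F.Nonempty → φ F ≤ F.card * c :=
    phi_le_card φ hmono hinv hsub
  set RS : Finset G → ℝ → Set ℝ :=
    fun K δ => {x | ∃ F : Finset G, F.Nonempty ∧ IsFolnerInv K δ F ∧ x = φ F / F.card}
    with hRSdef
  have hmemRS : ∀ (K : Finset G) (δ : ℝ) (x : ℝ),
      x ∈ RS K δ ↔ ∃ F : Finset G, F.Nonempty ∧ IsFolnerInv K δ F ∧ x = φ F / F.card :=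
    fun _ _ _ => Iff.rfl
  have hRSpos : ∀ (K : Finset G) (δ : ℝ) (x : ℝ), x ∈ RS K δ → 0 ≤ x := by
    rintro K δ x ⟨F, hFne, _, rfl⟩
    apply div_nonneg (hpos F) (by positivity)
  have hRSc : ∀ (K : Finset G) (δ : ℝ) (x : ℝ), x ∈ RS K δ → x ≤ c := by
    rintro K δ x ⟨F, hFne, _, rfl⟩
    have hFc : (0:ℝ) < F.card := by exact_mod_cast Finset.card_pos.mpr hFne
    rw [div_le_iff₀ hFc]
    calc φ F ≤ F.card * c := hphile F hFne
    _ = c * F.card := by ring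
  have hRSne : ∀ (K : Finset G) (δ : ℝ), 0 < δ → (RS K δ).Nonempty := by
    intro K δ hδ
    obtain ⟨F, hFne, hFinv⟩ := hG K δ hδ
    exact ⟨φ F / F.card, F, hFne, hFinv, rfl⟩
  have hRSbdd : ∀ (K : Finset G) (δ : ℝ), BddBelow (RS K δ) :=
    fun K δ => ⟨0, fun x hx => hRSpos K δ x hx⟩
  set ℓ : Finset G → ℝ → ℝ := fun K δ => sInf (RS K δ) with hldef
  have hl0 : ∀ (K : Finset G) (δ : ℝ), 0 < δ → 0 ≤ ℓ K δ :=
    fun K δ hδ => le_csInf (hRSne K δ hδ) (fun x hx => hRSpos K δ x hx)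
  have hlc : ∀ (K : Finset G) (δ : ℝ), 0 < δ → ℓ K δ ≤ c := by
    intro K δ hδ
    obtain ⟨x, hx⟩ := hRSne K δ hδ
    exact le_trans (csInf_le (hRSbdd K δ) hx) (hRSc K δ x hx)
  have hlle : ∀ (K : Finset G) (δ : ℝ) (F : Finset G), F.Nonempty → IsFolnerInv K δ F →
      ℓ K δ ≤ φ F / F.card := by
    intro K δ F hFne hFinv
    exact csInf_le (hRSbdd K δ) ⟨F, hFne, hFinv, rfl⟩
  set bS : Set ℝ := {x | ∃ (K : Finset G) (δ : ℝ), 0 < δ ∧ x = ℓ K δ} with hbSdef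
  have hbSne : bS.Nonempty := ⟨ℓ ∅ 1, ∅, 1, one_pos, rfl⟩
  have hbSbdd : BddAbove bS := by
    refine ⟨c, ?_⟩
    rintro x ⟨K, δ, hδ, rfl⟩
    exact hlc K δ hδ
  set b := sSup bS with hbdef
  have hb0 : 0 ≤ b :=
    le_trans (hl0 ∅ 1 one_pos) (le_csSup hbSbdd ⟨∅, 1, one_pos, rfl⟩)
  have hbc : b ≤ c := csSup_le hbSne (by rintro x ⟨K, δ, hδ, rfl⟩; exact hlc K δ hδ)
  refine ⟨b, hb0, ?_⟩
  intro ε hε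
  -- parameters
  set θ : ℝ := min (1/2) (ε / (2*(6*c + ε + 1))) with hθdef
  have hθ0 : 0 < θ := lt_min (by norm_num) (by positivity)
  have hθh : θ ≤ 1/2 := min_le_left _ _
  have hθε : θ * (2*(6*c + ε + 1)) ≤ ε := by
    have h1 : θ ≤ ε / (2*(6*c + ε + 1)) := min_le_right _ _
    have h2 : (0:ℝ) < 2*(6*c + ε + 1) := by positivity
    calc θ * (2*(6*c + ε + 1)) ≤ (ε / (2*(6*c + ε + 1))) * (2*(6*c + ε + 1)) :=
          mul_le_mul_of_nonneg_right h1 (le_of_lt h2)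
    _ = ε := by field_simp
  obtain ⟨n, hpow⟩ : ∃ n : ℕ, (1-θ)^n ≤ θ := by
    obtain ⟨n, hn⟩ := exists_pow_lt_of_lt_one hθ0 (by linarith : (1:ℝ) - θ < 1)
    exact ⟨n, le_of_lt hn⟩
  -- good shapes exist at every invariance level
  have good : ∀ (K : Finset G) (δ : ℝ), 0 < δ →
      ∃ Sh : Finset G, Sh.Nonempty ∧ IsFolnerInv K δ Sh ∧ φ Sh ≤ (b + ε/4) * Sh.card := by
    intro K δ hδ
    have hne := hRSne K δ hδ
    have hlb : ℓ K δ ≤ b := le_csSup hbSbdd ⟨K, δ, hδ, rfl⟩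
    have hlt : ℓ K δ < ℓ K δ + ε/4 := by linarith
    obtain ⟨x, hx, hxlt⟩ := exists_lt_of_csInf_lt hne hlt
    obtain ⟨F, hFne, hFinv, rfl⟩ := hx
    refine ⟨F, hFne, hFinv, ?_⟩
    have hFc : (0:ℝ) < F.card := by exact_mod_cast Finset.card_pos.mpr hFne
    have h2 : φ F / F.card ≤ b + ε/4 := by linarith
    have h3 := mul_le_mul_of_nonneg_right h2 (le_of_lt hFc)
    rwa [div_mul_cancel₀ _ (ne_of_gt hFc)] at h3
  -- chain of shapes
  have chain : ∃ T : ℕ → Finset G, ∀ j, j < n →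
      (T j).Nonempty ∧ φ (T j) ≤ (b + ε/4) * (T j).card ∧
      IsFolnerInv ((Finset.range j).biUnion (fun i => (T i).image (fun x => x⁻¹))) θ (T j) := by
    suffices h : ∀ N : ℕ, ∃ T : ℕ → Finset G, ∀ j, j < N →
        (T j).Nonempty ∧ φ (T j) ≤ (b + ε/4) * (T j).card ∧
        IsFolnerInv ((Finset.range j).biUnion (fun i => (T i).image (fun x => x⁻¹))) θ (T j) from
      h n
    intro N
    induction N with
    | zero => exact ⟨fun _ => {1}, fun j hj => absurd hj (by omega)⟩
    | succ N ihN =>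
      obtain ⟨T, hT⟩ := ihN
      obtain ⟨Sh, hShne, hShinv, hShr⟩ :=
        good ((Finset.range N).biUnion (fun i => (T i).image (fun x => x⁻¹))) θ hθ0
      refine ⟨fun j => if j = N then Sh else T j, ?_⟩
      intro j hj
      by_cases hjN : j = N
      · subst hjN
        simp only [if_pos rfl]
        refine ⟨hShne, hShr, ?_⟩
        have hcongr : (Finset.range j).biUnion
            (fun i => ((if i = j then Sh else T i)).image (fun x => x⁻¹))
            = (Finset.range j).biUnion (fun i => (T i).image (fun x => x⁻¹)) := by
          apply Finset.biUnion_congr rfl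
          intro i hi
          rw [if_neg (Nat.ne_of_lt (Finset.mem_range.mp hi))]
        rw [hcongr]
        exact hShinv
      · have hjN' : j < N := by omega
        simp only [if_neg hjN]
        obtain ⟨h1, h2, h3⟩ := hT j hjN'
        refine ⟨h1, h2, ?_⟩
        have hcongr : (Finset.range j).biUnion
            (fun i => ((if i = N then Sh else T i)).image (fun x => x⁻¹))
            = (Finset.range j).biUnion (fun i => (T i).image (fun x => x⁻¹)) := by
          apply Finset.biUnion_congr rfl
          intro i hi
          have : i ≠ N := by have := Finset.mem_range.mp hi; omega
          rw [if_neg this]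
        rw [hcongr]
        exact h3
  obtain ⟨T, hT⟩ := chain
  set K_A := (Finset.range n).biUnion (fun m => T m) with hKAdef
  have hKA : ∀ m, m < n → T m ⊆ K_A :=
    fun m hm => Finset.subset_biUnion_of_mem (fun m => T m) (Finset.mem_range.mpr hm)
  set δ_A : ℝ := θ / (K_A.card + 1) with hδAdef
  have hδA0 : 0 < δ_A := by positivity
  -- lower bound invariance level
  obtain ⟨K₀, δ₀, hδ₀, hblow⟩ : ∃ (K₀ : Finset G) (δ₀ : ℝ), 0 < δ₀ ∧ b - ε ≤ ℓ K₀ δ₀ := by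
    obtain ⟨x, hx, hxgt⟩ := exists_lt_of_lt_csSup hbSne (show b - ε < b by linarith)
    obtain ⟨K₀, δ₀, hδ₀, rfl⟩ := hx
    exact ⟨K₀, δ₀, hδ₀, le_of_lt hxgt⟩
  refine ⟨K_A ∪ K₀, min δ_A δ₀, lt_min hδA0 hδ₀, ?_⟩
  intro F hFne hFinv
  have hFc : (0:ℝ) < F.card := by exact_mod_cast Finset.card_pos.mpr hFne
  have hinvA : IsFolnerInv K_A δ_A F :=
    folner_mono Finset.subset_union_left (min_le_left _ _) hFinv
  have hinv0 : IsFolnerInv K₀ δ₀ F :=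
    folner_mono Finset.subset_union_right (min_le_right _ _) hFinv
  -- lower bound
  have hlower : b - ε ≤ φ F / F.card :=
    le_trans hblow (hlle K₀ δ₀ F hFne hinv0)
  -- upper bound via quasitiling
  have hchainT : ∀ i m, i < m → m < n →
      (((((T i).image (fun x => x⁻¹)) * T m) \ T m).card : ℝ) ≤ θ * (T m).card := by
    intro i m him hmn
    have h3 := (hT m hmn).2.2
    have h4 : IsFolnerInv ((T i).image (fun x => x⁻¹)) θ (T m) := by
      apply folner_mono ?_ (le_refl θ) h3
      exact Finset.subset_biUnion_of_mem (fun i => (T i).image (fun x => x⁻¹))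
        (Finset.mem_range.mpr him)
    exact (folner_def _ _ _).mp h4
  have hAinvF : (((K_A * F) \ F).card : ℝ) ≤ (θ / (K_A.card + 1)) * F.card :=
    (folner_def _ _ _).mp hinvA
  obtain ⟨L, hLidx, hUsub, hUcount, hUuncov⟩ :=
    stage_induction T n θ hθ0 hθh (fun m hm => (hT m hm).1) hchainT F hFne K_A hKA hAinvF
      n (le_refl n)
  set U := listUnion (L.map fun p => tile (T p.1) p.2) with hUdef
  set l := (L.map fun p => tile (T p.1) p.2) ++ (F \ U).toList.map (fun a => ({a} : Finset G))
    with hldef2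
  have hcov : ∀ a ∈ F, ∃ P ∈ l, a ∈ P := by
    intro a ha
    by_cases haU : a ∈ U
    · rw [hUdef, mem_listUnion] at haU
      obtain ⟨P, hP, haP⟩ := haU
      exact ⟨P, List.mem_append_left _ hP, haP⟩
    · refine ⟨{a}, List.mem_append_right _ ?_, Finset.mem_singleton_self a⟩
      exact List.mem_map.mpr ⟨a, Finset.mem_toList.mpr (Finset.mem_sdiff.mpr ⟨ha, haU⟩), rfl⟩
  have hφA := cover_list φ hpos hmono hsub l F hFne hcov
  rw [hldef2, List.map_append, List.sum_append] at hφA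
  -- bound the tile part
  have hsumL_nn : 0 ≤ (L.map fun p => ((T p.1).card:ℝ)).sum :=
    list_sum_nonneg' _ _ (fun p _ => by positivity)
  have hUF : (U.card : ℝ) ≤ F.card := by exact_mod_cast Finset.card_le_card hUsub
  have hsumL_le : (L.map fun p => ((T p.1).card:ℝ)).sum ≤ (1 + 2*θ) * F.card := by
    have h1 : (1-θ) * (L.map fun p => ((T p.1).card:ℝ)).sum ≤ F.card := le_trans hUcount hUF
    have ha : (1+2*θ)*((1-θ) * (L.map fun p => ((T p.1).card:ℝ)).sum) ≤ (1+2*θ)*F.card :=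
      mul_le_mul_of_nonneg_left h1 (by linarith)
    have hb : 0 ≤ (θ*(1-2*θ))*(L.map fun p => ((T p.1).card:ℝ)).sum := by
      apply mul_nonneg (mul_nonneg hθ0.le (by linarith)) hsumL_nn
    nlinarith [ha, hb]
  have hsumA : ((L.map fun p => tile (T p.1) p.2).map φ).sum
      ≤ (b + ε/4) * ((L.map fun p => ((T p.1).card:ℝ)).sum) := by
    rw [List.map_map]
    have hle := list_sum_le L (φ ∘ fun p => tile (T p.1) p.2)
        (fun p => (b+ε/4)*((T p.1).card:ℝ)) ?_
    · rw [list_sum_mul] at hle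
      exact hle
    · intro p hp
      show φ (tile (T p.1) p.2) ≤ _
      have heq : tile (T p.1) p.2 = (T p.1).image (fun x => x * p.2) := rfl
      rw [heq, hinv]
      exact (hT p.1 (hLidx p hp).2).2.1
  -- the singleton part
  have hsumB : (((F \ U).toList.map (fun a => ({a} : Finset G))).map φ).sum
      = ((F \ U).card : ℝ) * c := by
    rw [List.map_map]
    have hcomp : (φ ∘ fun a => ({a} : Finset G)) = fun a => φ ({a} : Finset G) := rfl
    rw [hcomp, toList_map_sum']
    rw [Finset.sum_congr rfl (fun a _ => hsing a), Finset.sum_const, nsmul_eq_mul]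
  have huncov : ((F \ U).card : ℝ) ≤ 4*θ*F.card := by
    have h1 : ((1-θ)^n + 3*θ) ≤ 4*θ := by linarith
    calc ((F \ U).card : ℝ) ≤ ((1-θ)^n + 3*θ) * F.card := hUuncov
    _ ≤ 4*θ*F.card := mul_le_mul_of_nonneg_right h1 (le_of_lt hFc)
  -- combine
  have hbε4 : 0 ≤ b + ε/4 := by linarith
  have hupper : φ F ≤ (b + ε) * F.card := by
    have h1 : ((L.map fun p => tile (T p.1) p.2).map φ).sum
        ≤ (b + ε/4) * ((1 + 2*θ) * F.card) :=
      le_trans hsumA (mul_le_mul_of_nonneg_left hsumL_le hbε4)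
    have h2 : (((F \ U).toList.map (fun a => ({a} : Finset G))).map φ).sum ≤ 4*θ*F.card*c := by
      rw [hsumB]
      exact mul_le_mul_of_nonneg_right huncov hc0
    have hscal : (b + ε/4) * (1 + 2*θ) + 4*θ*c ≤ b + ε := by
      have hθb : θ * b ≤ θ * c := mul_le_mul_of_nonneg_left hbc hθ0.le
      nlinarith [hθε, hθ0.le, hc0, hε.le]
    nlinarith [h1, h2, hφA, hFc, hscal]
  have hupper' : φ F / F.card ≤ b + ε := by
    rw [div_le_iff₀ hFc]
    linarith [hupper]
  rw [abs_le]
  constructor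
  · linarith
  · linarith
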